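/- For every natural number m and all real x, V_{m+1}(x) ≤ V_m(x), where V_m(x) = (1/m!) ∫_0^∞ u^m e^{-u}/√(x² + u) du. -/

import Mathlib

open MeasureTheory Set Real Filter

-- integrable bound
lemma intBound (p : ℕ) : IntegrableOn (fun u : ℝ => Real.exp (-u) * u ^ ((p:ℝ) - 1/2)) (Set.Ioi 0) := by
  have h : (0:ℝ) < (p:ℝ) + 1/2 := by positivity
  have := Real.GammaIntegral_convergent h
  have he : (p:ℝ) + 1/2 - 1 = (p:ℝ) - 1/2 := by ring
  rwa [he] at this

-- pointwise bound for the main integrands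
lemma ptBound (p : ℕ) {c u : ℝ} (hc : 0 ≤ c) (hu : 0 < u) :
    u ^ p * Real.exp (-u) / Real.sqrt (c + u) ≤ Real.exp (-u) * u ^ ((p:ℝ) - 1/2) := by
  have h2 : 0 < Real.sqrt u := Real.sqrt_pos.2 hu
  have h1 : Real.sqrt u ≤ Real.sqrt (c + u) := Real.sqrt_le_sqrt (by linarith)
  have key : u ^ p * Real.exp (-u) / Real.sqrt u = Real.exp (-u) * u ^ ((p:ℝ) - 1/2) := by
    rw [Real.sqrt_eq_rpow, ← Real.rpow_natCast u p, mul_comm, mul_div_assoc,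
      ← Real.rpow_sub hu]
  calc u ^ p * Real.exp (-u) / Real.sqrt (c + u)
      ≤ u ^ p * Real.exp (-u) / Real.sqrt u := by
        gcongr
    _ = Real.exp (-u) * u ^ ((p:ℝ) - 1/2) := key

lemma intAB (p : ℕ) {c : ℝ} (hc : 0 ≤ c) :
    IntegrableOn (fun u : ℝ => u ^ p * Real.exp (-u) / Real.sqrt (c + u)) (Set.Ioi 0) := by
  apply Integrable.mono' (intBound p)
  · exact (((measurable_id.pow_const p).mul (Real.measurable_exp.comp measurable_neg)).div
      (Real.continuous_sqrt.measurable.comp (measurable_const.add measurable_id))).aestronglyMeasurable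
  · rw [ae_restrict_iff' measurableSet_Ioi]
    filter_upwards with u hu
    rw [Set.mem_Ioi] at hu
    rw [Real.norm_eq_abs, abs_of_nonneg (by positivity)]
    exact ptBound p hc hu

lemma intC (p : ℕ) {c : ℝ} (hc : 0 ≤ c) :
    IntegrableOn (fun u : ℝ => u ^ (p+1) * Real.exp (-u) / (2 * Real.sqrt (c + u) * (c + u)))
      (Set.Ioi 0) := by
  apply Integrable.mono' (intBound p)
  · exact (((measurable_id.pow_const (p+1)).mul (Real.measurable_exp.comp measurable_neg)).div
      ((measurable_const.mul (Real.continuous_sqrt.measurable.comp (measurable_const.add measurable_id))).mul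
        (measurable_const.add measurable_id))).aestronglyMeasurable
  · rw [ae_restrict_iff' measurableSet_Ioi]
    filter_upwards with u hu
    rw [Set.mem_Ioi] at hu
    rw [Real.norm_eq_abs, abs_of_nonneg (by positivity)]
    have h2 : 0 < Real.sqrt u := Real.sqrt_pos.2 hu
    have h1 : Real.sqrt u ≤ Real.sqrt (c + u) := Real.sqrt_le_sqrt (by linarith)
    have key : u ^ (p+1) * Real.exp (-u) / (Real.sqrt u * u) = Real.exp (-u) * u ^ ((p:ℝ) - 1/2) := by
      rw [Real.sqrt_eq_rpow, ← Real.rpow_natCast u (p+1)]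
      rw [show u ^ ((1:ℝ)/2) * u = u ^ ((3:ℝ)/2) by
        rw [show ((3:ℝ)/2) = 1/2 + 1 by ring, Real.rpow_add hu, Real.rpow_one]]
      rw [mul_comm, mul_div_assoc, ← Real.rpow_sub hu]
      push_cast
      ring_nf
    calc u ^ (p+1) * Real.exp (-u) / (2 * Real.sqrt (c + u) * (c + u))
        ≤ u ^ (p+1) * Real.exp (-u) / (Real.sqrt u * u) := by
          apply div_le_div_of_nonneg_left (by positivity) (by positivity)
          calc Real.sqrt u * u ≤ Real.sqrt (c+u) * (c+u) := by
                apply mul_le_mul h1 (by linarith) hu.le (Real.sqrt_nonneg _)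
            _ ≤ 2 * Real.sqrt (c+u) * (c+u) := by nlinarith [Real.sqrt_nonneg (c+u)]
      _ = Real.exp (-u) * u ^ ((p:ℝ) - 1/2) := key

lemma hasDerivG (m : ℕ) {c : ℝ} (hc : 0 ≤ c) {u : ℝ} (hu : 0 < u) :
    HasDerivAt (fun u : ℝ => u ^ (m+1) * Real.exp (-u) / Real.sqrt (c + u))
      (((m:ℝ)+1) * (u ^ m * Real.exp (-u) / Real.sqrt (c + u))
        - u ^ (m+1) * Real.exp (-u) / Real.sqrt (c + u)
        - u ^ (m+1) * Real.exp (-u) / (2 * Real.sqrt (c + u) * (c + u))) u := by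
  have hcu : 0 < c + u := by linarith
  have hs : 0 < Real.sqrt (c + u) := Real.sqrt_pos.2 hcu
  have hsq : Real.sqrt (c + u) ^ 2 = c + u := Real.sq_sqrt hcu.le
  have hsqrt : HasDerivAt (fun u : ℝ => Real.sqrt (c + u)) (1 / (2 * Real.sqrt (c + u))) u := by
    have h0 : HasDerivAt (fun u : ℝ => c + u) 1 u := (hasDerivAt_id u).const_add c
    have h1 := (Real.hasDerivAt_sqrt hcu.ne').comp u h0
    simpa [Function.comp_def] using h1
  have hinv : HasDerivAt (fun u : ℝ => (Real.sqrt (c + u))⁻¹)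
      (-(1 / (2 * Real.sqrt (c + u))) / (Real.sqrt (c + u)) ^ 2) u := hsqrt.inv hs.ne'
  have he : HasDerivAt (fun u : ℝ => Real.exp (-u)) (Real.exp (-u) * (-1)) u := by
    have h1 := (Real.hasDerivAt_exp (-u)).comp u (hasDerivAt_id u).neg
    simpa [Function.comp_def] using h1
  have hP : HasDerivAt (fun u : ℝ => u ^ (m+1) * Real.exp (-u))
      ((((m:ℝ)+1) * u ^ m) * Real.exp (-u) + u ^ (m+1) * (Real.exp (-u) * (-1))) u := by
    have h1 := (hasDerivAt_pow (m+1) u).mul he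
    have h2 : (((m+1:ℕ)):ℝ) * u ^ (m + 1 - 1) = ((m:ℝ)+1) * u ^ m := by push_cast; ring_nf
    rw [h2] at h1
    exact h1
  have hfun : (fun u : ℝ => u ^ (m+1) * Real.exp (-u) / Real.sqrt (c + u))
      = fun u : ℝ => (u ^ (m+1) * Real.exp (-u)) * (Real.sqrt (c + u))⁻¹ := by
    funext v; rw [div_eq_mul_inv]
  rw [hfun]
  refine (hP.mul hinv).congr_deriv ?_
  set s := Real.sqrt (c + u) with hsdef
  rw [← hsq]
  field_simp
  ring

lemma main_ineq (m : ℕ) {c : ℝ} (hc : 0 ≤ c) :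
    ∫ u in Set.Ioi (0:ℝ), u ^ (m+1) * Real.exp (-u) / Real.sqrt (c + u)
      ≤ ((m:ℝ)+1) * ∫ u in Set.Ioi (0:ℝ), u ^ m * Real.exp (-u) / Real.sqrt (c + u) := by
  have hIA := intAB m hc
  have hIB := intAB (m+1) hc
  have hIC := intC m hc
  -- continuity at 0 within Ici 0
  have hcont : ContinuousWithinAt
      (fun u : ℝ => u ^ (m+1) * Real.exp (-u) / Real.sqrt (c + u)) (Set.Ici 0) 0 := by
    have h00 : (0:ℝ) ^ (m+1) * Real.exp (-0) / Real.sqrt (c + 0) = 0 := by simp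
    rw [ContinuousWithinAt, h00]
    have lb : ∀ u ∈ Set.Ici (0:ℝ), 0 ≤ u ^ (m+1) * Real.exp (-u) / Real.sqrt (c + u) := by
      intro u hu
      rw [Set.mem_Ici] at hu
      have h0 : 0 ≤ Real.sqrt (c + u) := Real.sqrt_nonneg _
      positivity
    have ub : ∀ u ∈ Set.Ici (0:ℝ),
        u ^ (m+1) * Real.exp (-u) / Real.sqrt (c + u) ≤ u ^ m * Real.sqrt u := by
      intro u hu
      rw [Set.mem_Ici] at hu
      rcases eq_or_lt_of_le hu with h | h
      · rw [← h]; norm_num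
      · have hs : 0 < Real.sqrt u := Real.sqrt_pos.2 h
        have h1 : Real.sqrt u ≤ Real.sqrt (c + u) := Real.sqrt_le_sqrt (by linarith)
        have hexp : Real.exp (-u) ≤ 1 := Real.exp_le_one_iff.mpr (by linarith)
        have step1 : u ^ (m+1) * Real.exp (-u) / Real.sqrt (c + u)
            ≤ u ^ (m+1) * 1 / Real.sqrt u := by
          refine div_le_div₀ (by positivity) ?_ hs h1
          have hp : (0:ℝ) ≤ u ^ (m+1) := by positivity
          nlinarith
        have step2 : u ^ (m+1) * 1 / Real.sqrt u = u ^ m * Real.sqrt u := by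
          rw [mul_one, pow_succ, mul_div_assoc, Real.div_sqrt]
        linarith
      
    have tend : Filter.Tendsto (fun u : ℝ => u ^ m * Real.sqrt u)
        (nhdsWithin 0 (Set.Ici 0)) (nhds 0) := by
      have h1 := ((continuous_pow m).mul Real.continuous_sqrt).tendsto 0
      have h2 : (0:ℝ) ^ m * Real.sqrt 0 = 0 := by simp
      simp only [Pi.mul_apply, h2] at h1
      exact h1.mono_left nhdsWithin_le_nhds
    exact squeeze_zero' (Filter.eventually_of_mem self_mem_nhdsWithin lb)
      (Filter.eventually_of_mem self_mem_nhdsWithin ub) tend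
  -- limit at infinity
  have htop : Filter.Tendsto (fun u : ℝ => u ^ (m+1) * Real.exp (-u) / Real.sqrt (c + u))
      Filter.atTop (nhds 0) := by
    apply squeeze_zero' ?_ ?_ (Real.tendsto_pow_mul_exp_neg_atTop_nhds_zero (m+1))
    · filter_upwards [Filter.eventually_ge_atTop (0:ℝ)] with u hu
      have h0 : 0 ≤ Real.sqrt (c + u) := Real.sqrt_nonneg _
      positivity
    · filter_upwards [Filter.eventually_ge_atTop (1:ℝ)] with u hu
      have h1 : (1:ℝ) ≤ Real.sqrt (c + u) := by
        have h2 := Real.sqrt_le_sqrt (show (1:ℝ) ≤ c + u by linarith)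
        rwa [Real.sqrt_one] at h2
      exact div_le_self (by positivity) h1
  have hderiv : ∀ u ∈ Set.Ioi (0:ℝ),
      HasDerivAt (fun u : ℝ => u ^ (m+1) * Real.exp (-u) / Real.sqrt (c + u))
      (((m:ℝ)+1) * (u ^ m * Real.exp (-u) / Real.sqrt (c + u))
        - u ^ (m+1) * Real.exp (-u) / Real.sqrt (c + u)
        - u ^ (m+1) * Real.exp (-u) / (2 * Real.sqrt (c + u) * (c + u))) u :=
    fun u hu => hasDerivG m hc (Set.mem_Ioi.mp hu)
  have hint : IntegrableOn (fun u : ℝ =>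
      ((m:ℝ)+1) * (u ^ m * Real.exp (-u) / Real.sqrt (c + u))
        - u ^ (m+1) * Real.exp (-u) / Real.sqrt (c + u)
        - u ^ (m+1) * Real.exp (-u) / (2 * Real.sqrt (c + u) * (c + u))) (Set.Ioi 0) :=
    ((hIA.const_mul _).sub hIB).sub hIC
  have key := integral_Ioi_of_hasDerivAt_of_tendsto hcont hderiv hint htop
  have h00 : (0:ℝ) ^ (m+1) * Real.exp (-0) / Real.sqrt (c + 0) = 0 := by simp
  rw [h00, sub_zero] at key
  have e1 : (∫ u in Set.Ioi (0:ℝ),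
        (((m:ℝ)+1) * (u ^ m * Real.exp (-u) / Real.sqrt (c + u))
          - u ^ (m+1) * Real.exp (-u) / Real.sqrt (c + u)
          - u ^ (m+1) * Real.exp (-u) / (2 * Real.sqrt (c + u) * (c + u))))
      = (∫ u in Set.Ioi (0:ℝ),
          (((m:ℝ)+1) * (u ^ m * Real.exp (-u) / Real.sqrt (c + u))
            - u ^ (m+1) * Real.exp (-u) / Real.sqrt (c + u)))
        - ∫ u in Set.Ioi (0:ℝ), u ^ (m+1) * Real.exp (-u) / (2 * Real.sqrt (c + u) * (c + u)) :=
    integral_sub ((hIA.const_mul _).sub hIB) hIC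
  have e2 : (∫ u in Set.Ioi (0:ℝ),
        (((m:ℝ)+1) * (u ^ m * Real.exp (-u) / Real.sqrt (c + u))
          - u ^ (m+1) * Real.exp (-u) / Real.sqrt (c + u)))
      = ((m:ℝ)+1) * (∫ u in Set.Ioi (0:ℝ), u ^ m * Real.exp (-u) / Real.sqrt (c + u))
        - ∫ u in Set.Ioi (0:ℝ), u ^ (m+1) * Real.exp (-u) / Real.sqrt (c + u) := by
    rw [integral_sub (hIA.const_mul _) hIB, integral_const_mul]
  have hCnn : 0 ≤ ∫ u in Set.Ioi (0:ℝ),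
      u ^ (m+1) * Real.exp (-u) / (2 * Real.sqrt (c + u) * (c + u)) := by
    apply setIntegral_nonneg measurableSet_Ioi
    intro u hu
    rw [Set.mem_Ioi] at hu
    have h0 : 0 ≤ Real.sqrt (c + u) := Real.sqrt_nonneg _
    positivity
  linarith

noncomputable def Vm (m : ℕ) (x : ℝ) : ℝ :=
  (1 / (Nat.factorial m : ℝ)) * ∫ u in Set.Ioi (0:ℝ), u^m * Real.exp (-u) / Real.sqrt (x^2 + u)

theorem Vm_antitone : ∀ (m : ℕ) (x : ℝ), Vm (m+1) x ≤ Vm m x := by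
  intro m x
  have hc : (0:ℝ) ≤ x ^ 2 := sq_nonneg x
  have h := main_ineq m hc
  rw [Vm, Vm]
  have hfact : ((Nat.factorial (m+1) : ℝ)) = ((m:ℝ)+1) * (Nat.factorial m : ℝ) := by
    rw [Nat.factorial_succ]; push_cast; ring
  have hf : (0:ℝ) < (Nat.factorial m : ℝ) := by exact_mod_cast m.factorial_pos
  have hm : (0:ℝ) < (m:ℝ)+1 := by positivity
  rw [hfact]
  calc (1/(((m:ℝ)+1) * (Nat.factorial m : ℝ))) *
        ∫ u in Set.Ioi (0:ℝ), u^(m+1) * Real.exp (-u) / Real.sqrt (x^2 + u)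
      ≤ (1/(((m:ℝ)+1) * (Nat.factorial m : ℝ))) *
        (((m:ℝ)+1) * ∫ u in Set.Ioi (0:ℝ), u^m * Real.exp (-u) / Real.sqrt (x^2 + u)) := by
        apply mul_le_mul_of_nonneg_left h (by positivity)
    _ = (1/(Nat.factorial m : ℝ)) *
        ∫ u in Set.Ioi (0:ℝ), u^m * Real.exp (-u) / Real.sqrt (x^2 + u) := by
        field_simp
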